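/- Let n and l be natural numbers with n ≥ 1 and l ≥ n+2. Then Σ_{r=1}^{l−n} ( (l−1)! / ( (l−r)! (r−1)! ) ) · n! · n^{l−r−n} + Σ_{r=l−n+1}^{l} (l−1)!/(r−1)! ≤ n! · ( n^{−n} (n+1)^{l−1} + (3/2)·(l−1)!/( n! (l−n)! ) ). -/

import Mathlib

lemma fac_ge3 (a : ℕ) (ha : 2 ≤ a) : ∀ b, a ≤ b →
    a.factorial * 3 ^ (b - a) ≤ b.factorial := by
  intro b
  induction b with
  | zero => intro h; omega
  | succ m ih =>
    intro hb
    rcases Nat.lt_or_ge m a with h | h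
    · have : a = m + 1 := by omega
      subst this; simp
    · have h1 := ih h
      have e : m + 1 - a = (m - a) + 1 := by omega
      rw [e, pow_succ, Nat.factorial_succ]
      calc a.factorial * (3 ^ (m - a) * 3) = (a.factorial * 3 ^ (m - a)) * 3 := by ring
        _ ≤ m.factorial * 3 := Nat.mul_le_mul_right _ h1
        _ ≤ (m + 1) * m.factorial := by
            rw [Nat.mul_comm]
            exact Nat.mul_le_mul_right _ (by omega)

lemma geo_le (m : ℕ) : ∑ j ∈ Finset.range m, (1 / 3 : ℝ) ^ j ≤ 3 / 2 := by
  have h : (1 / 3 : ℝ) ≠ 1 := by norm_num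
  rw [geom_sum_eq h]
  have h0 : (0 : ℝ) ≤ (1 / 3 : ℝ) ^ m := by positivity
  have he : ((1 / 3 : ℝ) ^ m - 1) / (1 / 3 - 1) = 3 / 2 * (1 - (1 / 3 : ℝ) ^ m) := by ring
  rw [he]
  nlinarith

theorem stmt_9 (n l : ℕ) (hn : 1 ≤ n) (hl : n + 2 ≤ l) :
    (∑ r ∈ Finset.Icc 1 (l - n),
        (Nat.factorial (l - 1) : ℝ) /
          ((Nat.factorial (l - r) : ℝ) * (Nat.factorial (r - 1) : ℝ)) *
          (Nat.factorial n : ℝ) * (n : ℝ) ^ (l - r - n))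
      + (∑ r ∈ Finset.Icc (l - n + 1) l,
          (Nat.factorial (l - 1) : ℝ) / (Nat.factorial (r - 1) : ℝ))
      ≤ (Nat.factorial n : ℝ) *
          ((n : ℝ) ^ (-(n : ℤ)) * (n + 1 : ℝ) ^ (l - 1) +
            (3 / 2 : ℝ) * (Nat.factorial (l - 1) : ℝ) /
              ((Nat.factorial n : ℝ) * (Nat.factorial (l - n) : ℝ))) := by
  have hn0 : (0 : ℝ) < n := by exact_mod_cast hn
  have hnfac : (0 : ℝ) < (Nat.factorial n : ℝ) := by
    exact_mod_cast Nat.factorial_pos n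
  have hzpow : (n : ℝ) ^ (-(n : ℤ)) = ((n : ℝ) ^ n)⁻¹ := by
    rw [zpow_neg, zpow_natCast]
  have hzpow_pos : (0 : ℝ) < (n : ℝ) ^ (-(n : ℤ)) := by
    rw [hzpow]; positivity
  -- Part 1
  have hS1 : (∑ r ∈ Finset.Icc 1 (l - n),
        (Nat.factorial (l - 1) : ℝ) /
          ((Nat.factorial (l - r) : ℝ) * (Nat.factorial (r - 1) : ℝ)) *
          (Nat.factorial n : ℝ) * (n : ℝ) ^ (l - r - n))
      ≤ (Nat.factorial n : ℝ) * ((n : ℝ) ^ (-(n : ℤ)) * (n + 1 : ℝ) ^ (l - 1)) := by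
    have step1 : (∑ r ∈ Finset.Icc 1 (l - n),
        (Nat.factorial (l - 1) : ℝ) /
          ((Nat.factorial (l - r) : ℝ) * (Nat.factorial (r - 1) : ℝ)) *
          (Nat.factorial n : ℝ) * (n : ℝ) ^ (l - r - n))
        = (Nat.factorial n : ℝ) * (n : ℝ) ^ (-(n : ℤ)) *
          ∑ r ∈ Finset.Icc 1 (l - n), (((l - 1).choose (r - 1) : ℝ) * (n : ℝ) ^ (l - r)) := by
      rw [Finset.mul_sum]
      apply Finset.sum_congr rfl
      intro r hr
      have hr' := Finset.mem_Icc.mp hr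
      have hch : (((l - 1).choose (r - 1) : ℝ)) =
          (Nat.factorial (l - 1) : ℝ) /
            ((Nat.factorial (r - 1) : ℝ) * (Nat.factorial (l - 1 - (r - 1)) : ℝ)) :=
        Nat.cast_choose ℝ (by omega)
      have e1 : l - 1 - (r - 1) = l - r := by omega
      rw [e1] at hch
      have e2 : l - r = (l - r - n) + n := by omega
      have hpow : (n : ℝ) ^ (l - r) = (n : ℝ) ^ (l - r - n) * (n : ℝ) ^ n := by
        rw [← pow_add]
        exact congrArg (fun k => (n : ℝ) ^ k) (by omega : l - r = l - r - n + n)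
      rw [hch, hpow, hzpow]
      have hpn : (0 : ℝ) < (n : ℝ) ^ n := by positivity
      field_simp
    rw [step1]
    have hsub : (∑ r ∈ Finset.Icc 1 (l - n), (((l - 1).choose (r - 1) : ℝ) * (n : ℝ) ^ (l - r)))
        ≤ ∑ r ∈ Finset.Icc 1 l, (((l - 1).choose (r - 1) : ℝ) * (n : ℝ) ^ (l - r)) := by
      apply Finset.sum_le_sum_of_subset_of_nonneg
      · apply Finset.Icc_subset_Icc_right; omega
      · intro i _ _; positivity
    have hbin : (∑ r ∈ Finset.Icc 1 l, (((l - 1).choose (r - 1) : ℝ) * (n : ℝ) ^ (l - r)))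
        = ((n : ℝ) + 1) ^ (l - 1) := by
      rw [← Finset.Ico_add_one_right_eq_Icc, Finset.sum_Ico_eq_sum_range]
      have e3 : l + 1 - 1 = l := by omega
      rw [e3, add_comm (n : ℝ) 1, add_pow]
      have e4 : l - 1 + 1 = l := by omega
      rw [e4]
      apply Finset.sum_congr rfl
      intro i _
      have e5 : 1 + i - 1 = i := by omega
      have e6 : l - (1 + i) = l - 1 - i := by omega
      rw [e5, e6, one_pow]
      ring
    calc (Nat.factorial n : ℝ) * (n : ℝ) ^ (-(n : ℤ)) *
          ∑ r ∈ Finset.Icc 1 (l - n), (((l - 1).choose (r - 1) : ℝ) * (n : ℝ) ^ (l - r))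
        ≤ (Nat.factorial n : ℝ) * (n : ℝ) ^ (-(n : ℤ)) *
          ∑ r ∈ Finset.Icc 1 l, (((l - 1).choose (r - 1) : ℝ) * (n : ℝ) ^ (l - r)) := by
          apply mul_le_mul_of_nonneg_left hsub
          positivity
      _ = (Nat.factorial n : ℝ) * ((n : ℝ) ^ (-(n : ℤ)) * (n + 1 : ℝ) ^ (l - 1)) := by
          rw [hbin]; ring_nf
  -- Part 2
  have hS2 : (∑ r ∈ Finset.Icc (l - n + 1) l,
          (Nat.factorial (l - 1) : ℝ) / (Nat.factorial (r - 1) : ℝ))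
      ≤ (3 / 2 : ℝ) * (Nat.factorial (l - 1) : ℝ) / (Nat.factorial (l - n) : ℝ) := by
    have hln : 2 ≤ l - n := by omega
    calc (∑ r ∈ Finset.Icc (l - n + 1) l,
          (Nat.factorial (l - 1) : ℝ) / (Nat.factorial (r - 1) : ℝ))
        ≤ ∑ r ∈ Finset.Icc (l - n + 1) l,
            (Nat.factorial (l - 1) : ℝ) / (Nat.factorial (l - n) : ℝ) *
              (1 / 3 : ℝ) ^ (r - (l - n + 1)) := by
          apply Finset.sum_le_sum
          intro r hr
          have hr' := Finset.mem_Icc.mp hr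
          have key : (l - n).factorial * 3 ^ (r - 1 - (l - n)) ≤ (r - 1).factorial :=
            fac_ge3 (l - n) hln (r - 1) (by omega)
          have hkey : ((l - n).factorial : ℝ) * 3 ^ (r - 1 - (l - n)) ≤ ((r - 1).factorial : ℝ) := by
            exact_mod_cast key
          have e7 : r - 1 - (l - n) = r - (l - n + 1) := by omega
          rw [e7] at hkey
          have heq : (Nat.factorial (l - 1) : ℝ) / (Nat.factorial (l - n) : ℝ) *
              (1 / 3 : ℝ) ^ (r - (l - n + 1)) =
              (Nat.factorial (l - 1) : ℝ) /
                ((Nat.factorial (l - n) : ℝ) * 3 ^ (r - (l - n + 1))) := by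
            rw [div_pow, one_pow, div_mul_div_comm, mul_one]
          rw [heq]
          exact div_le_div_of_nonneg_left (by positivity) (by positivity) hkey
      _ = (Nat.factorial (l - 1) : ℝ) / (Nat.factorial (l - n) : ℝ) *
            ∑ r ∈ Finset.Icc (l - n + 1) l, (1 / 3 : ℝ) ^ (r - (l - n + 1)) := by
          rw [Finset.mul_sum]
      _ ≤ (Nat.factorial (l - 1) : ℝ) / (Nat.factorial (l - n) : ℝ) * (3 / 2) := by
          apply mul_le_mul_of_nonneg_left _ (by positivity)
          rw [← Finset.Ico_add_one_right_eq_Icc, Finset.sum_Ico_eq_sum_range]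
          have e8 : l + 1 - (l - n + 1) = n := by omega
          rw [e8]
          calc (∑ i ∈ Finset.range n, (1 / 3 : ℝ) ^ (l - n + 1 + i - (l - n + 1)))
              = ∑ i ∈ Finset.range n, (1 / 3 : ℝ) ^ i := by
                apply Finset.sum_congr rfl
                intro i _
                congr 1
                omega
            _ ≤ 3 / 2 := geo_le n
      _ = (3 / 2 : ℝ) * (Nat.factorial (l - 1) : ℝ) / (Nat.factorial (l - n) : ℝ) := by ring
  have hrhs : (Nat.factorial n : ℝ) *
          ((n : ℝ) ^ (-(n : ℤ)) * (n + 1 : ℝ) ^ (l - 1) +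
            (3 / 2 : ℝ) * (Nat.factorial (l - 1) : ℝ) /
              ((Nat.factorial n : ℝ) * (Nat.factorial (l - n) : ℝ)))
      = (Nat.factorial n : ℝ) * ((n : ℝ) ^ (-(n : ℤ)) * (n + 1 : ℝ) ^ (l - 1)) +
        (3 / 2 : ℝ) * (Nat.factorial (l - 1) : ℝ) / (Nat.factorial (l - n) : ℝ) := by
    field_simp
  rw [hrhs]
  linarith
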